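/- arXiv:2505.08911 — 3 statements merged into one kernel-verified Lean document; each statement's English description precedes it below -/
import Mathlib

section
/- Suppose ξ, ζ ∈ M satisfy Q(ξ) = 0, Q(ζ) = 0 and B(ζ, ξ) = 1, and suppose that for r ∈ R, r·ι(ξ) = 0 in C implies r = 0. Then for every v ∈ M, left multiplication by ι(v) preserves the left-multiplication image ι(ξ)·C (i.e. ι(v)·ι(ξ)·c ∈ ι(ξ)·C for all c ∈ C) if and only if B(v, ξ) = 0. -/
/-- in the Clifford algebra of `Q`, for `ξ` isotropic with a hyperbolic partner `ζ`,
left multiplication by `ι(v)` preserves `ι(ξ)·C` iff `B(v, ξ) = 0`. -/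
theorem statement14 {R M : Type*} [CommRing R] [Invertible (2 : R)]
    [AddCommGroup M] [Module R M]
    (B : LinearMap.BilinForm R M) (hB : ∀ x y : M, B x y = B y x)
    (Q : QuadraticForm R M) (hQ : ∀ x : M, Q x = B x x)
    (ξ ζ : M) (hξ : Q ξ = 0) (hζ : Q ζ = 0) (hpair : B ζ ξ = 1)
    (hreg : ∀ r : R, r • (CliffordAlgebra.ι Q ξ) = 0 → r = 0)
    (v : M) :
    (∀ c : CliffordAlgebra Q, ∃ c' : CliffordAlgebra Q,
        CliffordAlgebra.ι Q v * (CliffordAlgebra.ι Q ξ * c) = CliffordAlgebra.ι Q ξ * c')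
      ↔ B v ξ = 0 := by
  set ι := CliffordAlgebra.ι Q with hι
  have key : ∀ a b : M, ι a * ι b + ι b * ι a =
      algebraMap R (CliffordAlgebra Q) (2 * B a b) := by
    intro a b
    have h := CliffordAlgebra.ι_mul_ι_add_swap (Q := Q) a b
    rw [hι, h]
    congr 1
    simp only [QuadraticMap.polar, hQ, map_add, LinearMap.add_apply]
    rw [hB b a]
    ring
  have hsq : ι ξ * ι ξ = 0 := by
    rw [hι, CliffordAlgebra.ι_sq_scalar, hξ, map_zero]
  constructor
  · intro h
    obtain ⟨c', hc'⟩ := h (ι ζ)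
    have h1 : ι v * ι ξ = algebraMap R (CliffordAlgebra Q) (2 * B v ξ) - ι ξ * ι v :=
      eq_sub_of_add_eq (key v ξ)
    have hlhs : ι v * (ι ξ * ι ζ) =
        algebraMap R (CliffordAlgebra Q) (2 * B v ξ) * ι ζ - ι ξ * (ι v * ι ζ) := by
      rw [← mul_assoc, h1]
      noncomm_ring
    rw [hlhs] at hc'
    have h2 : algebraMap R (CliffordAlgebra Q) (2 * B v ξ) * ι ζ
        = ι ξ * (c' + ι v * ι ζ) := by
      rw [mul_add, ← hc']
      noncomm_ring
    have h3 : algebraMap R (CliffordAlgebra Q) (2 * B v ξ) * (ι ξ * ι ζ) = 0 := by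
      calc algebraMap R (CliffordAlgebra Q) (2 * B v ξ) * (ι ξ * ι ζ)
          = ι ξ * (algebraMap R (CliffordAlgebra Q) (2 * B v ξ) * ι ζ) := by
            rw [← mul_assoc, ← mul_assoc, Algebra.commutes]
        _ = (ι ξ * ι ξ) * (c' + ι v * ι ζ) := by rw [h2, mul_assoc]
        _ = 0 := by rw [hsq, zero_mul]
    have hξζ : ι ξ * ι ζ = algebraMap R (CliffordAlgebra Q) 2 - ι ζ * ι ξ := by
      have hk := key ξ ζ
      rw [hB ξ ζ, hpair, mul_one] at hk
      exact eq_sub_of_add_eq hk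
    rw [hξζ, mul_sub, sub_eq_zero] at h3
    have e : (2 : R) * (2 * B v ξ) = (2 * B v ξ) * 2 := by ring
    have h4 : algebraMap R (CliffordAlgebra Q) (2 * (2 * B v ξ)) * ι ξ = 0 := by
      rw [e, map_mul, h3, mul_assoc, mul_assoc, hsq, mul_zero, mul_zero]
    have h5 : (2 * (2 * B v ξ)) • ι ξ = 0 := by
      rw [Algebra.smul_def, h4]
    have h7 : (2 : R) * (2 * B v ξ) = 0 := hreg _ h5
    have inv2 : IsUnit (2 : R) := isUnit_of_invertible 2
    have h8 : (2 : R) * B v ξ = 0 :=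
      inv2.mul_left_cancel (by rw [h7, mul_zero])
    exact inv2.mul_left_cancel (by rw [h8, mul_zero])
  · intro hB0 c
    refine ⟨-(ι v * c), ?_⟩
    have h1 : ι v * ι ξ = -(ι ξ * ι v) := by
      have hk := key v ξ
      rw [hB0, mul_zero, map_zero] at hk
      exact eq_neg_of_add_eq_zero_left hk
    rw [← mul_assoc, h1]
    noncomm_ring
end

section
/- Let s ∈ {0, …, n} and let y = (a₁, …, aₙ) ∈ (½ℤ)ⁿ be such that exactly s of the coordinates aᵢ lie in ½ + ℤ. Let x⁽ˢ⁾ = (½, …, ½, 0, …, 0) (with s coordinates equal to ½). If the O-module (L(y) + L(x⁽ˢ⁾))/L(x⁽ˢ⁾) has length 1, then either y = x⁽ˢ⁾ + εᵢ or y = x⁽ˢ⁾ − εᵢ for some 1 ≤ i ≤ n, or y = x⁽ˢ⁾ ± ½εⱼ ± ½εᵢ for some 1 ≤ j ≤ s and s + 1 ≤ i ≤ n (any combination of signs), where ε₁, …, εₙ is the standard basis of ℝⁿ. -/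
open scoped Classical

noncomputable section

namespace VertexLatticePosition

variable {O K V : Type*} [CommRing O] [Field K] [Algebra O K]
  [AddCommGroup V] [Module K V] [Module O V] [IsScalarTower O K V]

/-- The length of the `O`-module `N'/N`. -/
def relLength (N N' : Submodule O V) : WithBot ℕ∞ :=
  Order.krullDim (Submodule O (↥N' ⧸ (N.comap N'.subtype)))

/-- The lattice `L(y) = Span_O(π^⌈a₁⌉e₁, …, π^⌈aₙ⌉eₙ, π^⌈−a₁⌉f₁, …, π^⌈−aₙ⌉fₙ)` attached to
`y = (a₁, …, aₙ)`, where `eᵢ = b (inl i)` and `fᵢ = b (inr i)`. -/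
def latticeOf (π : O) {n : ℕ} (b : Module.Basis (Fin n ⊕ Fin n) K V) (y : Fin n → ℚ) :
    Submodule O V :=
  Submodule.span O
    ((Set.range fun i : Fin n => ((algebraMap O K π) ^ (⌈y i⌉ : ℤ)) • b (Sum.inl i)) ∪
     (Set.range fun i : Fin n => ((algebraMap O K π) ^ (⌈-(y i)⌉ : ℤ)) • b (Sum.inr i)))

set_option linter.unusedSectionVars false
set_option maxHeartbeats 1000000

section Aux

def expOf {n : ℕ} (y : Fin n → ℚ) : Fin n ⊕ Fin n → ℤ :=
  Sum.elim (fun i => ⌈y i⌉) (fun i => ⌈-(y i)⌉)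

variable [IsDomain O] [IsDiscreteValuationRing O] [IsFractionRing O K]

lemma aux_pi_ne (π : O) (hπ : Irreducible π) : algebraMap O K π ≠ 0 := by
  intro h
  exact hπ.ne_zero (IsFractionRing.injective O K (by simpa using h))

lemma aux_NM (π : O) (hπ : Irreducible π) (m : ℤ) (d : ℕ) (hd : 1 ≤ d)
    (o w : O) (hw : IsUnit w) :
    algebraMap O K w * (algebraMap O K π) ^ m ≠
      algebraMap O K o * (algebraMap O K π) ^ (m + (d : ℤ)) := by
  intro h
  have hπ0 : algebraMap O K π ≠ 0 := aux_pi_ne π hπ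
  rw [zpow_add₀ hπ0, ← mul_assoc, mul_right_comm] at h
  have h2 : algebraMap O K w = algebraMap O K o * (algebraMap O K π) ^ (d : ℤ) :=
    mul_right_cancel₀ (zpow_ne_zero m hπ0) h
  rw [zpow_natCast, ← map_pow, ← map_mul] at h2
  have h3 : w = o * π ^ d := IsFractionRing.injective O K h2
  have : π ∣ w := h3 ▸ (dvd_pow_self π (by omega : d ≠ 0)).mul_left o
  exact hπ.not_isUnit (isUnit_of_dvd_unit this hw)

lemma latticeOf_eq (π : O) {n : ℕ} (b : Module.Basis (Fin n ⊕ Fin n) K V) (y : Fin n → ℚ) :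
    latticeOf π b y =
      Submodule.span O (Set.range fun j => ((algebraMap O K π) ^ (expOf y j) : K) • b j) := by
  unfold latticeOf
  congr 1
  rw [show (fun j => ((algebraMap O K π) ^ (expOf y j) : K) • b j) =
      Sum.elim (fun i : Fin n => ((algebraMap O K π) ^ (⌈y i⌉ : ℤ)) • b (Sum.inl i))
        (fun i : Fin n => ((algebraMap O K π) ^ (⌈-(y i)⌉ : ℤ)) • b (Sum.inr i)) from
    funext fun j => by cases j <;> rfl]
  rw [Set.Sum.elim_range]


lemma mem_latticeOf_iff (π : O) (hπ : Irreducible π) {n : ℕ} (b : Module.Basis (Fin n ⊕ Fin n) K V)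
    (y : Fin n → ℚ) (v : V) :
    v ∈ latticeOf π b y ↔
      ∀ j, ∃ o : O, b.repr v j = algebraMap O K o * (algebraMap O K π) ^ (expOf y j) := by
  haveI : NoZeroSMulDivisors O K :=
    ⟨fun {c x} h => by
      rwa [Algebra.smul_def, mul_eq_zero, map_eq_zero_iff _ (IsFractionRing.injective O K)] at h⟩
  set u : (Fin n ⊕ Fin n) → Kˣ :=
    (fun j => (Units.mk0 _ (aux_pi_ne (K := K) π hπ)) ^ (expOf y j)) with hu_def
  have hu : ∀ j, ((u j : Kˣ) : K) = (algebraMap O K π) ^ (expOf y j) := fun j => by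
    rw [hu_def]; simp [Units.val_zpow_eq_zpow_val]
  have hne : ∀ j, ((algebraMap O K π) ^ (expOf y j) : K) ≠ 0 :=
    fun j => zpow_ne_zero _ (aux_pi_ne π hπ)
  have hb : latticeOf π b y = Submodule.span O (Set.range (b.unitsSMul u)) := by
    rw [latticeOf_eq π b y]
    have : (fun j => ((algebraMap O K π) ^ (expOf y j) : K) • b j) = ⇑(b.unitsSMul u) :=
      funext fun j => by rw [Module.Basis.unitsSMul_apply, Units.smul_def, hu]
    rw [this]
  rw [hb, Module.Basis.mem_span_iff_repr_mem]
  refine forall_congr' fun j => ?_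
  rw [Module.Basis.repr_unitsSMul]
  constructor
  · rintro ⟨o, ho⟩
    refine ⟨o, ?_⟩
    rw [eq_comm, inv_smul_eq_iff] at ho
    rw [ho, Units.smul_def, hu, smul_eq_mul, mul_comm]
  · rintro ⟨o, ho⟩
    refine ⟨o, ?_⟩
    rw [ho, Units.smul_def, Units.val_inv_eq_inv_val, hu, mul_comm ((algebraMap O K) o),
      smul_eq_mul, inv_mul_cancel_left₀ (hne j)]

lemma pow_smul_mem (π : O) (hπ : Irreducible π) {n : ℕ} (b : Module.Basis (Fin n ⊕ Fin n) K V)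
    (y : Fin n → ℚ) (j : Fin n ⊕ Fin n) (m : ℤ) (hm : expOf y j ≤ m) :
    ((algebraMap O K π) ^ m) • b j ∈ latticeOf π b y := by
  rw [latticeOf_eq]
  have h1 : ((algebraMap O K π) ^ (expOf y j)) • b j ∈
      Submodule.span O (Set.range fun j => ((algebraMap O K π) ^ (expOf y j) : K) • b j) :=
    Submodule.subset_span ⟨j, rfl⟩
  have h2 := Submodule.smul_mem _ (π ^ (m - expOf y j).toNat) h1
  have he : ((m - expOf y j).toNat : ℤ) + expOf y j = m := by omega
  have key : (π ^ (m - expOf y j).toNat : O) • (((algebraMap O K π) ^ (expOf y j)) • b j) =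
      ((algebraMap O K π) ^ m) • b j := by
    rw [← algebraMap_smul K (π ^ (m - expOf y j).toNat), smul_smul, map_pow,
      ← zpow_natCast (algebraMap O K π) ((m - expOf y j).toNat),
      ← zpow_add₀ (aux_pi_ne π hπ), he]
  rw [← key]
  exact h2


lemma relLength_self_ne_one (N : Submodule O V) : relLength N N ≠ 1 := by
  intro h
  haveI hsub : Subsingleton (↥N ⧸ N.comap N.subtype) :=
    Submodule.Quotient.subsingleton_iff.mpr (Submodule.comap_subtype_self N)
  haveI : Subsingleton (Submodule O (↥N ⧸ N.comap N.subtype)) :=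
    (Submodule.subsingleton_iff O).mpr hsub
  have h2 := Order.krullDim_nonpos_of_subsingleton
    (α := Submodule O (↥N ⧸ N.comap N.subtype))
  rw [relLength] at h
  rw [h] at h2
  exact absurd h2 (by decide)

lemma relLength_ne_one_of_chain {N N' : Submodule O V}
    (v₁ v₂ : V) (h₁ : v₁ ∈ N') (h₂ : v₂ ∈ N') (hv₁ : v₁ ∉ N)
    (hv₂ : ∀ o : O, v₂ - o • v₁ ∉ N) : relLength N N' ≠ 1 := by
  intro hlen
  rw [relLength] at hlen
  set P := N.comap N'.subtype with hP
  set q₁ : ↥N' ⧸ P := Submodule.Quotient.mk ⟨v₁, h₁⟩ with hq₁def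
  set q₂ : ↥N' ⧸ P := Submodule.Quotient.mk ⟨v₂, h₂⟩ with hq₂def
  have hq₁ : q₁ ≠ 0 := by
    rw [hq₁def, Ne, Submodule.Quotient.mk_eq_zero]
    intro h
    exact hv₁ h
  have hq₂ : q₂ ∉ Submodule.span O {q₁} := by
    intro h
    obtain ⟨o, ho⟩ := Submodule.mem_span_singleton.mp h
    apply hv₂ o
    have hzero : Submodule.Quotient.mk (p := P) (⟨v₂, h₂⟩ - o • ⟨v₁, h₁⟩) = 0 := by
      rw [Submodule.Quotient.mk_sub, Submodule.Quotient.mk_smul, ← hq₁def, ← hq₂def, ← ho,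
        sub_self]
    rw [Submodule.Quotient.mk_eq_zero] at hzero
    exact hzero
  have hlt1 : (⊥ : Submodule O (↥N' ⧸ P)) < Submodule.span O {q₁} := by
    rw [bot_lt_iff_ne_bot]
    exact Submodule.ne_bot_iff _ |>.mpr ⟨q₁, Submodule.mem_span_singleton_self q₁, hq₁⟩
  have hle : Submodule.span O {q₁} ≤ Submodule.span O {q₁, q₂} :=
    Submodule.span_mono (by simp)
  have hmem : q₂ ∈ Submodule.span O ({q₁, q₂} : Set (↥N' ⧸ P)) :=
    Submodule.subset_span (by simp)
  have hlt2 : Submodule.span O ({q₁} : Set (↥N' ⧸ P)) < Submodule.span O {q₁, q₂} := by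
    refine lt_of_le_of_ne hle fun h => hq₂ ?_
    rw [h]
    exact hmem
  let p : LTSeries (Submodule O (↥N' ⧸ P)) :=
    ⟨2, ![⊥, Submodule.span O {q₁}, Submodule.span O {q₁, q₂}], by
      intro i
      fin_cases i
      · exact hlt1
      · exact hlt2⟩
  have h2 := Order.LTSeries.length_le_krullDim p
  rw [hlen] at h2
  have h3 : ((2 : ℕ) : WithBot ℕ∞) ≤ 1 := h2
  exact absurd h3 (by decide)


lemma repr_smul_basis_same {n : ℕ} (b : Module.Basis (Fin n ⊕ Fin n) K V) (c : K) (j : Fin n ⊕ Fin n) :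
    b.repr (c • b j) j = c := by simp

lemma repr_smul_basis_ne {n : ℕ} (b : Module.Basis (Fin n ⊕ Fin n) K V) (c : K)
    {j j' : Fin n ⊕ Fin n} (h : j ≠ j') : b.repr (c • b j) j' = 0 := by
  rw [map_smul]
  simp [Module.Basis.repr_self, Finsupp.single_apply, h]

lemma repr_sub_osmul {n : ℕ} (b : Module.Basis (Fin n ⊕ Fin n) K V) (v₁ v₂ : V) (o : O)
    (j : Fin n ⊕ Fin n) :
    b.repr (v₂ - o • v₁) j = b.repr v₂ j - algebraMap O K o * b.repr v₁ j := by
  rw [map_sub, ← algebraMap_smul K o v₁, map_smul]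
  rw [Finsupp.sub_apply, Finsupp.smul_apply, smul_eq_mul]

lemma not_mem_of_coord (π : O) (hπ : Irreducible π) {n : ℕ} (b : Module.Basis (Fin n ⊕ Fin n) K V)
    (x : Fin n → ℚ) (v : V) (j : Fin n ⊕ Fin n) (m : ℤ) (w : O) (hw : IsUnit w)
    (hm : m < expOf x j)
    (hv : b.repr v j = algebraMap O K w * (algebraMap O K π) ^ m) :
    v ∉ latticeOf π b x := by
  rw [mem_latticeOf_iff π hπ]
  push_neg
  refine ⟨j, fun o => ?_⟩
  rw [hv]
  have he : expOf x j = m + ((expOf x j - m).toNat : ℤ) := by omega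
  rw [he]
  exact aux_NM π hπ m _ (by omega) o w hw

lemma key_reduction (π : O) (hπ : Irreducible π) {n : ℕ} (b : Module.Basis (Fin n ⊕ Fin n) K V)
    (y x : Fin n → ℚ)
    (hlen : relLength (latticeOf π b x) (latticeOf π b y ⊔ latticeOf π b x) = 1) :
    ∃ j₀, expOf y j₀ = expOf x j₀ - 1 ∧ ∀ j, j ≠ j₀ → expOf x j ≤ expOf y j := by
  have hπ0 : algebraMap O K π ≠ 0 := aux_pi_ne π hπ
  -- Step 1: not all exponents grow
  have step1 : ¬ ∀ j, expOf x j ≤ expOf y j := by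
    intro hall
    have hle : latticeOf π b y ≤ latticeOf π b x := by
      rw [latticeOf_eq π b y, Submodule.span_le]
      rintro v ⟨j, rfl⟩
      exact pow_smul_mem π hπ b x j (expOf y j) (hall j)
    rw [sup_eq_right.mpr hle] at hlen
    exact relLength_self_ne_one _ hlen
  push_neg at step1
  obtain ⟨j₀, hj₀⟩ := step1
  refine ⟨j₀, ?_, ?_⟩
  · -- exponent drop at j₀ is exactly one
    by_contra hne
    have hgap : expOf y j₀ ≤ expOf x j₀ - 2 := by omega
    set c₁ : K := (algebraMap O K π) ^ (expOf x j₀ - 1) with hc₁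
    set c₂ : K := (algebraMap O K π) ^ (expOf x j₀ - 2) with hc₂
    refine relLength_ne_one_of_chain (c₁ • b j₀) (c₂ • b j₀) ?_ ?_ ?_ ?_ hlen
    · exact le_sup_left (a := latticeOf π b y) <|
        pow_smul_mem π hπ b y j₀ _ (by omega)
    · exact le_sup_left (a := latticeOf π b y) <|
        pow_smul_mem π hπ b y j₀ _ (by omega)
    · refine not_mem_of_coord π hπ b x _ j₀ (expOf x j₀ - 1) 1 isUnit_one (by omega) ?_
      rw [repr_smul_basis_same, map_one, one_mul]
    · intro o
      refine not_mem_of_coord π hπ b x _ j₀ (expOf x j₀ - 2) (1 - o * π)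
        (IsLocalRing.isUnit_one_sub_self_of_mem_nonunits _ fun hu =>
          hπ.not_isUnit (isUnit_of_mul_isUnit_right hu)) (by omega) ?_
      have hcc : c₁ = c₂ * algebraMap O K π := by
        rw [hc₁, hc₂, ← zpow_add_one₀ hπ0]
        congr 1
        omega
      rw [repr_sub_osmul, repr_smul_basis_same, repr_smul_basis_same, hcc, map_sub, map_one,
        map_mul]
      ring
  · -- no other index drops
    intro j hj
    by_contra hlt
    push_neg at hlt
    set c₁ : K := (algebraMap O K π) ^ (expOf x j₀ - 1) with hc₁
    set c₂ : K := (algebraMap O K π) ^ (expOf x j - 1) with hc₂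
    refine relLength_ne_one_of_chain (c₁ • b j₀) (c₂ • b j) ?_ ?_ ?_ ?_ hlen
    · exact le_sup_left (a := latticeOf π b y) <|
        pow_smul_mem π hπ b y j₀ _ (by omega)
    · exact le_sup_left (a := latticeOf π b y) <|
        pow_smul_mem π hπ b y j _ (by omega)
    · refine not_mem_of_coord π hπ b x _ j₀ (expOf x j₀ - 1) 1 isUnit_one (by omega) ?_
      rw [repr_smul_basis_same, map_one, one_mul]
    · intro o
      refine not_mem_of_coord π hπ b x _ j (expOf x j - 1) 1 isUnit_one (by omega) ?_
      rw [repr_sub_osmul, repr_smul_basis_same, repr_smul_basis_ne b c₁ hj.symm,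
        map_one, one_mul, mul_zero, sub_zero]

end Aux

lemma ceil_of_int {q : ℚ} {k : ℤ} (h : q = k) : ⌈q⌉ = k ∧ ⌈-q⌉ = -k := by
  subst h
  refine ⟨Int.ceil_intCast k, ?_⟩
  rw [← Int.cast_neg, Int.ceil_intCast]

lemma ceil_of_nonint {q : ℚ} (hhalf : ∃ m : ℤ, q = m / 2) (hni : ¬∃ k : ℤ, q = k) :
    ⌈-q⌉ = 1 - ⌈q⌉ ∧ q = (⌈q⌉ : ℚ) - 1/2 := by
  obtain ⟨m, rfl⟩ := hhalf
  rcases Int.even_or_odd m with ⟨t, ht⟩ | ⟨t, ht⟩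
  · exact absurd ⟨t, by rw [ht]; push_cast; ring⟩ hni
  · subst ht
    have h1 : ((2*t+1 : ℤ) : ℚ)/2 = (1/2 : ℚ) + (t : ℤ) := by push_cast; ring
    have h2 : -((1/2 : ℚ) + ((t : ℤ) : ℚ)) = (-(1/2) : ℚ) + ((-t : ℤ) : ℚ) := by
      push_cast; ring
    have hc1 : ⌈(1/2 : ℚ)⌉ = 1 := by
      rw [Int.ceil_eq_iff]
      norm_num
    have hc2 : ⌈(-(1/2) : ℚ)⌉ = 0 := by
      rw [Int.ceil_eq_iff]
      norm_num
    rw [h1, h2, Int.ceil_add_intCast, Int.ceil_add_intCast, hc1, hc2]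
    constructor
    · ring
    · push_cast; ring

lemma card_filter_lt (n s : ℕ) (hs : s ≤ n) :
    (Finset.univ.filter fun i : Fin n => (i : ℕ) < s).card = s := by
  classical
  have h : (Finset.univ.filter fun i : Fin n => (i : ℕ) < s) =
      Finset.map (Fin.castLEEmb hs) Finset.univ := by
    ext i
    simp only [Finset.mem_filter, Finset.mem_univ, true_and, Finset.mem_map,
      Fin.castLEEmb_apply]
    constructor
    · intro hi
      exact ⟨⟨(i : ℕ), hi⟩, Fin.ext rfl⟩
    · rintro ⟨a, rfl⟩
      simpa using a.2
  rw [h, Finset.card_map, Finset.card_univ, Fintype.card_fin]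

/-- if `(L(y) + L(x⁽ˢ⁾))/L(x⁽ˢ⁾)` has length `1`, then `y = x⁽ˢ⁾ ± εᵢ`, or
`y = x⁽ˢ⁾ ± ½εⱼ ± ½εᵢ` with `j` among the first `s` coordinates and `i` among the rest. -/
theorem statement15
    {O K V : Type*} [CommRing O] [IsDomain O] [IsDiscreteValuationRing O]
    [Field K] [Algebra O K] [IsFractionRing O K]
    [AddCommGroup V] [Module K V] [Module O V] [IsScalarTower O K V]
    (π : O) (hπ : Irreducible π)
    (n : ℕ) (b : Module.Basis (Fin n ⊕ Fin n) K V)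
    (s : ℕ) (hs : s ≤ n)
    (y : Fin n → ℚ)
    (hy : ∀ i : Fin n, ∃ m : ℤ, y i = (m : ℚ) / 2)
    (hcount : (Finset.univ.filter fun i : Fin n => ¬ ∃ m : ℤ, y i = (m : ℚ)).card = s)
    (x : Fin n → ℚ) (hx : x = fun i : Fin n => if (i : ℕ) < s then (1 / 2 : ℚ) else 0)
    (hlen : relLength (latticeOf π b x) (latticeOf π b y ⊔ latticeOf π b x) = 1) :
    (∃ i : Fin n, y = x + Pi.single i 1 ∨ y = x - Pi.single i 1) ∨
    (∃ j i : Fin n, (j : ℕ) < s ∧ s ≤ (i : ℕ) ∧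
      ∃ εj εi : ℚ, (εj = 1 ∨ εj = -1) ∧ (εi = 1 ∨ εi = -1) ∧
        y = x + (εj / 2) • Pi.single j 1 + (εi / 2) • Pi.single i 1) := by
  classical
  obtain ⟨j₀, hdrop, hrest⟩ := key_reduction π hπ b y x hlen
  have hxval : ∀ k : Fin n, x k = if (k : ℕ) < s then (1/2 : ℚ) else 0 := fun k => by
    rw [hx]
  have hc1 : ⌈(1/2 : ℚ)⌉ = 1 := by rw [Int.ceil_eq_iff] <;> norm_num
  have hc2 : ⌈(-(1/2) : ℚ)⌉ = 0 := by rw [Int.ceil_eq_iff] <;> norm_num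
  have exA : ∀ i : Fin n, expOf x (Sum.inl i) = if (i : ℕ) < s then 1 else 0 := by
    intro i
    show ⌈x i⌉ = _
    rw [hxval i]
    split
    · exact hc1
    · simp
  have exB : ∀ i : Fin n, expOf x (Sum.inr i) = 0 := by
    intro i
    show ⌈-(x i)⌉ = 0
    rw [hxval i]
    split
    · exact hc2
    · simp
  -- the non-integrality predicate
  set NI : Fin n → Prop := fun i => ¬∃ m : ℤ, y i = (m : ℚ) with hNI
  -- constraints away from j₀
  have C1 : ∀ i : Fin n, Sum.inl i ≠ j₀ → (if (i : ℕ) < s then 1 else 0 : ℤ) ≤ ⌈y i⌉ := by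
    intro i h
    have := hrest _ h
    rwa [exA] at this
  have C2 : ∀ i : Fin n, Sum.inr i ≠ j₀ → 0 ≤ ⌈-(y i)⌉ := by
    intro i h
    have := hrest _ h
    rwa [exB] at this
  have other_lt : ∀ i : Fin n, Sum.inl i ≠ j₀ → Sum.inr i ≠ j₀ → (i : ℕ) < s →
      y i = 1/2 ∧ NI i := by
    intro i h1 h2 hi
    have c1 := C1 i h1
    rw [if_pos hi] at c1
    have c2 := C2 i h2
    by_cases hni : NI i
    · obtain ⟨hneg, hval⟩ := ceil_of_nonint (hy i) hni
      rw [hneg] at c2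
      have hone : ⌈y i⌉ = 1 := by omega
      refine ⟨by rw [hval, hone]; norm_num, hni⟩
    · exfalso
      obtain ⟨k, hk⟩ := not_not.mp hni
      obtain ⟨e1, e2⟩ := ceil_of_int hk
      omega
  have other_ge : ∀ i : Fin n, Sum.inl i ≠ j₀ → Sum.inr i ≠ j₀ → s ≤ (i : ℕ) →
      (¬ NI i ∧ y i = 0) ∨ (NI i ∧ (y i = 1/2 ∨ y i = -1/2)) := by
    intro i h1 h2 hi
    have c1 := C1 i h1
    rw [if_neg (by omega)] at c1
    have c2 := C2 i h2
    by_cases hni : NI i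
    · obtain ⟨hneg, hval⟩ := ceil_of_nonint (hy i) hni
      rw [hneg] at c2
      refine Or.inr ⟨hni, ?_⟩
      have : ⌈y i⌉ = 0 ∨ ⌈y i⌉ = 1 := by omega
      rcases this with h | h
      · exact Or.inr (by rw [hval, h]; norm_num)
      · exact Or.inl (by rw [hval, h]; norm_num)
    · obtain ⟨k, hk⟩ := not_not.mp hni
      obtain ⟨e1, e2⟩ := ceil_of_int hk
      have : k = 0 := by omega
      exact Or.inl ⟨hni, by rw [hk, this]; norm_num⟩
  -- counting
  set F : Finset (Fin n) := Finset.univ.filter (fun i : Fin n => ¬∃ m : ℤ, y i = (m : ℚ))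
    with hF
  set A : Finset (Fin n) := Finset.univ.filter (fun i : Fin n => (i : ℕ) < s) with hA
  have cardA : A.card = s := card_filter_lt n s hs
  have memF : ∀ i, i ∈ F ↔ NI i := fun i => by
    rw [hF, Finset.mem_filter]
    simp [hNI]
  have memA : ∀ i, i ∈ A ↔ (i : ℕ) < s := fun i => by
    rw [hA, Finset.mem_filter]
    simp
  have scenI : (∀ i : Fin n, (i : ℕ) < s → NI i) → ∀ i : Fin n, s ≤ (i : ℕ) → ¬ NI i := by
    intro hall i hi hni
    have hsub : insert i A ⊆ F := by
      intro k hk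
      rcases Finset.mem_insert.mp hk with rfl | hk
      · exact (memF k).mpr hni
      · exact (memF k).mpr (hall k ((memA k).mp hk))
    have hcard := Finset.card_le_card hsub
    rw [Finset.card_insert_of_notMem (fun h => by
        have := (memA i).mp h; omega), cardA, hcount] at hcard
    omega
  have scenII : ∀ i₀ : Fin n, (i₀ : ℕ) < s → ¬ NI i₀ → (∀ i : Fin n, (i : ℕ) < s → i ≠ i₀ → NI i) →
      ∃ i₁ : Fin n, s ≤ (i₁ : ℕ) ∧ NI i₁ ∧ ∀ i : Fin n, s ≤ (i : ℕ) → i ≠ i₁ → ¬ NI i := by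
    intro i₀ hi₀ hni₀ hall
    have h1 : F ∩ A = A.erase i₀ := by
      ext k
      rw [Finset.mem_inter, Finset.mem_erase, memF, memA]
      constructor
      · rintro ⟨hk1, hk2⟩
        exact ⟨fun h => hni₀ (h ▸ hk1), hk2⟩
      · rintro ⟨hk1, hk2⟩
        exact ⟨hall k hk2 hk1, hk2⟩
    have h2 : (F ∩ A).card + (F \ A).card = F.card := Finset.card_inter_add_card_sdiff F A
    rw [h1, Finset.card_erase_of_mem ((memA i₀).mpr hi₀), cardA, hcount] at h2
    have h3 : (F \ A).card = 1 := by omega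
    obtain ⟨i₁, hi₁⟩ := Finset.card_eq_one.mp h3
    have hm : i₁ ∈ F \ A := hi₁ ▸ Finset.mem_singleton_self i₁
    obtain ⟨hmF, hmA⟩ := Finset.mem_sdiff.mp hm
    refine ⟨i₁, le_of_not_gt fun h => hmA ((memA i₁).mpr h), (memF i₁).mp hmF, ?_⟩
    · intro i hi hne hni
      have hmem : i ∈ F \ A := Finset.mem_sdiff.mpr
        ⟨(memF i).mpr hni, fun h => by have := (memA i).mp h; omega⟩
      rw [hi₁] at hmem
      exact hne (Finset.mem_singleton.mp hmem)
  -- builders for the conclusion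
  have mkplus : ∀ i₀ : Fin n, y i₀ = x i₀ + 1 → (∀ k : Fin n, k ≠ i₀ → y k = x k) →
      y = x + Pi.single i₀ 1 := by
    intro i₀ h0 hk
    funext k
    by_cases hki : k = i₀
    · subst hki
      simp [h0]
    · simp [Pi.single_eq_of_ne hki, hk k hki]
  have mkminus : ∀ i₀ : Fin n, y i₀ = x i₀ - 1 → (∀ k : Fin n, k ≠ i₀ → y k = x k) →
      y = x - Pi.single i₀ 1 := by
    intro i₀ h0 hk
    funext k
    by_cases hki : k = i₀
    · subst hki
      simp [h0]
    · simp [Pi.single_eq_of_ne hki, hk k hki]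
  have mk2 : ∀ (j i : Fin n) (εj εi : ℚ), j ≠ i → y j = x j + εj/2 → y i = x i + εi/2 →
      (∀ k : Fin n, k ≠ j → k ≠ i → y k = x k) →
      y = x + (εj / 2) • Pi.single j 1 + (εi / 2) • Pi.single i 1 := by
    intro j i εj εi hji h1 h2 hk
    funext k
    by_cases hkj : k = j
    · subst hkj
      simp [Pi.single_eq_same, Pi.single_eq_of_ne hji, h1]
    · by_cases hki : k = i
      · subst hki
        simp [Pi.single_eq_same, Pi.single_eq_of_ne hkj, h2]
      · simp [Pi.single_eq_of_ne hkj, Pi.single_eq_of_ne hki, hk k hkj hki]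
  -- the main case analysis
  rcases j₀ with i₀ | i₀
  · -- j₀ = inl i₀ : the ceiling of y i₀ drops
    have hdrop' : ⌈y i₀⌉ = (if (i₀ : ℕ) < s then 1 else 0) - 1 := by
      have : expOf y (Sum.inl i₀) = ⌈y i₀⌉ := rfl
      rw [← this, hdrop, exA]
    have c2 : 0 ≤ ⌈-(y i₀)⌉ := C2 i₀ (by simp)
    have other_lt' : ∀ i : Fin n, i ≠ i₀ → (i : ℕ) < s → y i = 1/2 ∧ NI i := fun i hne hi =>
      other_lt i (fun h => hne (Sum.inl_injective h)) (by simp) hi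
    have other_ge' : ∀ i : Fin n, i ≠ i₀ → s ≤ (i : ℕ) →
        (¬ NI i ∧ y i = 0) ∨ (NI i ∧ (y i = 1/2 ∨ y i = -1/2)) := fun i hne hi =>
      other_ge i (fun h => hne (Sum.inl_injective h)) (by simp) hi
    by_cases his : (i₀ : ℕ) < s
    · rw [if_pos his] at hdrop'
      by_cases hni₀ : NI i₀
      · -- y i₀ = -1/2 : conclusion y = x - ε_{i₀}
        obtain ⟨hneg, hval⟩ := ceil_of_nonint (hy i₀) hni₀
        have hv0 : y i₀ = -(1/2) := by rw [hval, hdrop']; norm_num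
        have hall : ∀ i : Fin n, (i : ℕ) < s → NI i := by
          intro i hi
          by_cases hne : i = i₀
          · exact hne ▸ hni₀
          · exact (other_lt' i hne hi).2
        have noGE := scenI hall
        refine Or.inl ⟨i₀, Or.inr (mkminus i₀ ?_ ?_)⟩
        · rw [hv0, hxval i₀, if_pos his]; norm_num
        · intro k hk
          rw [hxval k]
          by_cases hks : (k : ℕ) < s
          · rw [if_pos hks]; exact (other_lt' k hk hks).1
          · rw [if_neg hks]
            rcases other_ge' k hk (by omega) with ⟨_, h0⟩ | ⟨hni, _⟩
            · exact h0
            · exact absurd hni (noGE k (by omega))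
      · -- y i₀ = 0 : second conclusion with εj = -1
        obtain ⟨k₀, hk₀⟩ := not_not.mp hni₀
        obtain ⟨e1, e2⟩ := ceil_of_int hk₀
        have hk0 : k₀ = 0 := by omega
        have hv0 : y i₀ = 0 := by rw [hk₀, hk0]; norm_num
        have hall : ∀ i : Fin n, (i : ℕ) < s → i ≠ i₀ → NI i := fun i hi hne =>
          (other_lt' i hne hi).2
        obtain ⟨i₁, hi₁s, hni₁, huniq⟩ := scenII i₀ his hni₀ hall
        have hne₁₀ : i₁ ≠ i₀ := fun h => by subst h; omega
        rcases other_ge' i₁ hne₁₀ hi₁s with ⟨hni, _⟩ | ⟨_, hv₁⟩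
        · exact absurd hni₁ hni
        · have hvk : ∀ k : Fin n, k ≠ i₀ → k ≠ i₁ → y k = x k := by
            intro k hk0' hk1'
            rw [hxval k]
            by_cases hks : (k : ℕ) < s
            · rw [if_pos hks]; exact (other_lt' k hk0' hks).1
            · rw [if_neg hks]
              rcases other_ge' k hk0' (by omega) with ⟨_, h0⟩ | ⟨hni, _⟩
              · exact h0
              · exact absurd hni (huniq k (by omega) hk1')
          rcases hv₁ with hv₁ | hv₁
          · exact Or.inr ⟨i₀, i₁, his, hi₁s, -1, 1, Or.inr rfl, Or.inl rfl,
              mk2 i₀ i₁ (-1) 1 (fun h => by rw [h] at his; omega)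
                (by rw [hv0, hxval i₀, if_pos his]; norm_num)
                (by rw [hv₁, hxval i₁, if_neg (by omega)]; norm_num) hvk⟩
          · exact Or.inr ⟨i₀, i₁, his, hi₁s, -1, -1, Or.inr rfl, Or.inr rfl,
              mk2 i₀ i₁ (-1) (-1) (fun h => by rw [h] at his; omega)
                (by rw [hv0, hxval i₀, if_pos his]; norm_num)
                (by rw [hv₁, hxval i₁, if_neg (by omega)]; norm_num) hvk⟩
    · rw [if_neg his] at hdrop'
      have hall : ∀ i : Fin n, (i : ℕ) < s → NI i := by
        intro i hi
        exact (other_lt' i (fun h => by rw [h] at hi; omega) hi).2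
      have noGE := scenI hall
      by_cases hni₀ : NI i₀
      · exact absurd hni₀ (noGE i₀ (by omega))
      · -- y i₀ = -1 : conclusion y = x - ε_{i₀}
        obtain ⟨k₀, hk₀⟩ := not_not.mp hni₀
        obtain ⟨e1, e2⟩ := ceil_of_int hk₀
        have hk0 : k₀ = -1 := by omega
        have hv0 : y i₀ = -1 := by rw [hk₀, hk0]; norm_num
        refine Or.inl ⟨i₀, Or.inr (mkminus i₀ ?_ ?_)⟩
        · rw [hv0, hxval i₀, if_neg his]; norm_num
        · intro k hk
          rw [hxval k]
          by_cases hks : (k : ℕ) < s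
          · rw [if_pos hks]; exact (other_lt' k hk hks).1
          · rw [if_neg hks]
            rcases other_ge' k hk (by omega) with ⟨_, h0⟩ | ⟨hni, _⟩
            · exact h0
            · exact absurd hni (noGE k (by omega))
  · -- j₀ = inr i₀ : the ceiling of -(y i₀) drops
    have hdrop' : ⌈-(y i₀)⌉ = -1 := by
      have : expOf y (Sum.inr i₀) = ⌈-(y i₀)⌉ := rfl
      rw [← this, hdrop, exB]
      norm_num
    have c1 : (if (i₀ : ℕ) < s then 1 else 0 : ℤ) ≤ ⌈y i₀⌉ := C1 i₀ (by simp)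
    have other_lt' : ∀ i : Fin n, i ≠ i₀ → (i : ℕ) < s → y i = 1/2 ∧ NI i := fun i hne hi =>
      other_lt i (by simp) (fun h => hne (Sum.inr_injective h)) hi
    have other_ge' : ∀ i : Fin n, i ≠ i₀ → s ≤ (i : ℕ) →
        (¬ NI i ∧ y i = 0) ∨ (NI i ∧ (y i = 1/2 ∨ y i = -1/2)) := fun i hne hi =>
      other_ge i (by simp) (fun h => hne (Sum.inr_injective h)) hi
    by_cases his : (i₀ : ℕ) < s
    · rw [if_pos his] at c1
      by_cases hni₀ : NI i₀
      · -- y i₀ = 3/2 : conclusion y = x + ε_{i₀}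
        obtain ⟨hneg, hval⟩ := ceil_of_nonint (hy i₀) hni₀
        have hce : ⌈y i₀⌉ = 2 := by omega
        have hv0 : y i₀ = 3/2 := by rw [hval, hce]; norm_num
        have hall : ∀ i : Fin n, (i : ℕ) < s → NI i := by
          intro i hi
          by_cases hne : i = i₀
          · exact hne ▸ hni₀
          · exact (other_lt' i hne hi).2
        have noGE := scenI hall
        refine Or.inl ⟨i₀, Or.inl (mkplus i₀ ?_ ?_)⟩
        · rw [hv0, hxval i₀, if_pos his]; norm_num
        · intro k hk
          rw [hxval k]
          by_cases hks : (k : ℕ) < s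
          · rw [if_pos hks]; exact (other_lt' k hk hks).1
          · rw [if_neg hks]
            rcases other_ge' k hk (by omega) with ⟨_, h0⟩ | ⟨hni, _⟩
            · exact h0
            · exact absurd hni (noGE k (by omega))
      · -- y i₀ = 1 : second conclusion with εj = 1
        obtain ⟨k₀, hk₀⟩ := not_not.mp hni₀
        obtain ⟨e1, e2⟩ := ceil_of_int hk₀
        have hk0 : k₀ = 1 := by omega
        have hv0 : y i₀ = 1 := by rw [hk₀, hk0]; norm_num
        have hall : ∀ i : Fin n, (i : ℕ) < s → i ≠ i₀ → NI i := fun i hi hne =>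
          (other_lt' i hne hi).2
        obtain ⟨i₁, hi₁s, hni₁, huniq⟩ := scenII i₀ his hni₀ hall
        have hne₁₀ : i₁ ≠ i₀ := fun h => by subst h; omega
        rcases other_ge' i₁ hne₁₀ hi₁s with ⟨hni, _⟩ | ⟨_, hv₁⟩
        · exact absurd hni₁ hni
        · have hvk : ∀ k : Fin n, k ≠ i₀ → k ≠ i₁ → y k = x k := by
            intro k hk0' hk1'
            rw [hxval k]
            by_cases hks : (k : ℕ) < s
            · rw [if_pos hks]; exact (other_lt' k hk0' hks).1
            · rw [if_neg hks]
              rcases other_ge' k hk0' (by omega) with ⟨_, h0⟩ | ⟨hni, _⟩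
              · exact h0
              · exact absurd hni (huniq k (by omega) hk1')
          rcases hv₁ with hv₁ | hv₁
          · exact Or.inr ⟨i₀, i₁, his, hi₁s, 1, 1, Or.inl rfl, Or.inl rfl,
              mk2 i₀ i₁ 1 1 (fun h => by rw [h] at his; omega)
                (by rw [hv0, hxval i₀, if_pos his]; norm_num)
                (by rw [hv₁, hxval i₁, if_neg (by omega)]; norm_num) hvk⟩
          · exact Or.inr ⟨i₀, i₁, his, hi₁s, 1, -1, Or.inl rfl, Or.inr rfl,
              mk2 i₀ i₁ 1 (-1) (fun h => by rw [h] at his; omega)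
                (by rw [hv0, hxval i₀, if_pos his]; norm_num)
                (by rw [hv₁, hxval i₁, if_neg (by omega)]; norm_num) hvk⟩
    · rw [if_neg his] at c1
      have hall : ∀ i : Fin n, (i : ℕ) < s → NI i := by
        intro i hi
        exact (other_lt' i (fun h => by rw [h] at hi; omega) hi).2
      have noGE := scenI hall
      by_cases hni₀ : NI i₀
      · exact absurd hni₀ (noGE i₀ (by omega))
      · -- y i₀ = 1 : conclusion y = x + ε_{i₀}
        obtain ⟨k₀, hk₀⟩ := not_not.mp hni₀
        obtain ⟨e1, e2⟩ := ceil_of_int hk₀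
        have hk0 : k₀ = 1 := by omega
        have hv0 : y i₀ = 1 := by rw [hk₀, hk0]; norm_num
        refine Or.inl ⟨i₀, Or.inl (mkplus i₀ ?_ ?_)⟩
        · rw [hv0, hxval i₀, if_neg his]; norm_num
        · intro k hk
          rw [hxval k]
          by_cases hks : (k : ℕ) < s
          · rw [if_pos hks]; exact (other_lt' k hk hks).1
          · rw [if_neg hks]
            rcases other_ge' k hk (by omega) with ⟨_, h0⟩ | ⟨hni, _⟩
            · exact h0
            · exact absurd hni (noGE k (by omega))


end VertexLatticePosition
end
end

section
/- Let h ≥ 2 be even, r ≥ 1, and d ≥ h/2 + r. Let w ∈ S^B_d be the signed permutation determined by: w(1) = −1; w(i) = i for 2 ≤ i ≤ h/2; w(i) = i + 1 for h/2 + 1 ≤ i ≤ h/2 + r − 1; w(h/2 + r) = −(h/2 + 1); and w(i) = i for h/2 + r + 1 ≤ i ≤ d. Then inv_D(w) = h + r − 1. -/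
namespace SignedPerm

/-- The type-`D` inversion number of a signed permutation `w`, counted on the window
`{1, …, d}`: `#{(i,j) : i < j, w i > w j} + #{(i,j) : i < j, w (-i) > w j}`. -/
noncomputable def invD (d : ℕ) (w : ℤ → ℤ) : ℕ :=
  (((Finset.Icc (1 : ℤ) d) ×ˢ (Finset.Icc (1 : ℤ) d)).filter
      (fun q => q.1 < q.2 ∧ w q.2 < w q.1)).card +
  (((Finset.Icc (1 : ℤ) d) ×ˢ (Finset.Icc (1 : ℤ) d)).filter
      (fun q => q.1 < q.2 ∧ w q.2 < w (-q.1))).card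

/-- the length (inversion) computation for the Weyl group element `w_r`. -/
theorem statement17 (h e r d : ℕ) (he : h = 2 * e) (hh : 2 ≤ h) (hr : 1 ≤ r)
    (hd : e + r ≤ d)
    (w : ℤ → ℤ)
    (hsym : ∀ i : ℤ, w (-i) = -w i)
    (h1 : w 1 = -1)
    (h2 : ∀ i : ℤ, 2 ≤ i → i ≤ (e : ℤ) → w i = i)
    (h3 : ∀ i : ℤ, (e : ℤ) + 1 ≤ i → i ≤ (e : ℤ) + r - 1 → w i = i + 1)
    (h4 : w ((e : ℤ) + r) = -((e : ℤ) + 1))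
    (h5 : ∀ i : ℤ, (e : ℤ) + r + 1 ≤ i → i ≤ (d : ℤ) → w i = i) :
    invD d w = h + r - 1 := by
  have he1 : 1 ≤ e := by omega
  have hr1 : (1 : ℤ) ≤ r := by exact_mod_cast hr
  have he1' : (1 : ℤ) ≤ e := by exact_mod_cast he1
  have hd' : (e : ℤ) + r ≤ d := by exact_mod_cast hd
  -- bounds for w away from position 1 and e+r
  have hw2 : ∀ i : ℤ, 2 ≤ i → i ≤ (d : ℤ) → i ≠ (e : ℤ) + r → i ≤ w i ∧ w i ≤ i + 1 := by
    intro i hi hid hne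
    rcases le_or_gt i (e : ℤ) with h' | h'
    · rw [h2 i hi h']; omega
    rcases le_or_gt i ((e : ℤ) + r - 1) with h'' | h''
    · rw [h3 i (by omega) h'']; omega
    · rw [h5 i (by omega) hid]; omega
  have hA : (((Finset.Icc (1 : ℤ) d) ×ˢ (Finset.Icc (1 : ℤ) d)).filter
      (fun q => q.1 < q.2 ∧ w q.2 < w q.1))
      = (Finset.Icc (1 : ℤ) ((e : ℤ) + r - 1)) ×ˢ {(e : ℤ) + r} := by
    ext ⟨i, j⟩
    simp only [Finset.mem_filter, Finset.mem_product, Finset.mem_Icc, Finset.mem_singleton]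
    constructor
    · rintro ⟨⟨⟨hi1, hid⟩, hj1, hjd⟩, hij, hw⟩
      by_cases hje : j = (e : ℤ) + r
      · subst hje; exact ⟨⟨hi1, by omega⟩, rfl⟩
      · exfalso
        have hjb := hw2 j (by omega) hjd hje
        rcases eq_or_lt_of_le hi1 with h' | h'
        · rw [← h', h1] at hw; omega
        · by_cases hie : i = (e : ℤ) + r
          · rw [hie, h4] at hw; omega
          · have hib := hw2 i (by omega) (by omega) hie
            omega
    · rintro ⟨⟨hi1, hie⟩, rfl⟩
      refine ⟨⟨⟨hi1, by omega⟩, by omega, by omega⟩, by omega, ?_⟩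
      rw [h4]
      rcases eq_or_lt_of_le hi1 with h' | h'
      · rw [← h', h1]; omega
      · have hib := hw2 i (by omega) (by omega) (by omega)
        omega
  have hB : (((Finset.Icc (1 : ℤ) d) ×ˢ (Finset.Icc (1 : ℤ) d)).filter
      (fun q => q.1 < q.2 ∧ w q.2 < w (-q.1)))
      = (Finset.Icc (1 : ℤ) (e : ℤ)) ×ˢ {(e : ℤ) + r} := by
    ext ⟨i, j⟩
    simp only [Finset.mem_filter, Finset.mem_product, Finset.mem_Icc, Finset.mem_singleton,
      hsym]
    constructor
    · rintro ⟨⟨⟨hi1, hid⟩, hj1, hjd⟩, hij, hw⟩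
      -- hw : w j < -(w i), i.e. w i + w j < 0
      have hwi : w i + w j < 0 := by omega
      by_cases hje : j = (e : ℤ) + r
      · subst hje
        rw [h4] at hwi
        refine ⟨⟨hi1, ?_⟩, rfl⟩
        by_contra hie
        push_neg at hie
        have hib := hw2 i (by omega) (by omega) (by omega)
        have := h3 i (by omega) (by omega)
        omega
      · exfalso
        have hjb := hw2 j (by omega) hjd hje
        rcases eq_or_lt_of_le hi1 with h' | h'
        · rw [← h', h1] at hwi; omega
        · by_cases hie : i = (e : ℤ) + r
          · rw [hie, h4] at hwi
            -- then j > e + r, so w j = j ≥ e + r + 1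
            have := h5 j (by omega) hjd
            omega
          · have hib := hw2 i (by omega) (by omega) hie
            omega
    · rintro ⟨⟨hi1, hie⟩, rfl⟩
      refine ⟨⟨⟨hi1, by omega⟩, by omega, by omega⟩, by omega, ?_⟩
      rw [h4]
      rcases eq_or_lt_of_le hi1 with h' | h'
      · rw [← h', h1]; omega
      · rw [h2 i (by omega) hie]; omega
  rw [invD, hA, hB, Finset.card_product, Finset.card_product, Finset.card_singleton,
    Int.card_Icc, Int.card_Icc]
  omega

end SignedPerm
end
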